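/- Let Λ be a finitely aligned P-graph and F ⊆ Λ a finite subset. Then ∨F := ⋃_{G⊆F} MCE(G) is the smallest subset of Λ containing F and closed under taking minimal common extensions; in particular ∨F is finite. -/

import Mathlib

universe u

/-- A quasi-lattice ordered group in the sense of Nica: a (discrete) group `G` together
with a subsemigroup `P` containing the identity with `P ∩ P⁻¹ = {1}`, such that under the
partial order `p ≤ q ↔ p⁻¹ * q ∈ P`, any pair of elements of `G` with a common upper bound
in `P` has a least common upper bound in `P`. -/
structure QLOGroup (G : Type u) [Group G] where
  P : Set G
  one_mem : (1 : G) ∈ P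
  mul_mem : ∀ {p q : G}, p ∈ P → q ∈ P → p * q ∈ P
  eq_one_of_mem_inv_mem : ∀ p : G, p ∈ P → p⁻¹ ∈ P → p = 1
  lub_exists : ∀ p q : G, (∃ r ∈ P, p⁻¹ * r ∈ P ∧ q⁻¹ * r ∈ P) →
    ∃ r ∈ P, p⁻¹ * r ∈ P ∧ q⁻¹ * r ∈ P ∧
      ∀ s ∈ P, p⁻¹ * s ∈ P → q⁻¹ * s ∈ P → r⁻¹ * s ∈ P

namespace QLOGroup

variable {G : Type u} [Group G]

/-- The left-invariant partial order on `G` induced by `P`. -/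
def le (Q : QLOGroup G) (p q : G) : Prop := p⁻¹ * q ∈ Q.P

/-- `s` is the least common upper bound in `P` of `p` and `q` (i.e. `s = p ∨ q < ∞`). -/
def IsLub (Q : QLOGroup G) (p q s : G) : Prop :=
  s ∈ Q.P ∧ Q.le p s ∧ Q.le q s ∧ ∀ t ∈ Q.P, Q.le p t → Q.le q t → Q.le s t

/-- `s` is the least upper bound in `P` of the set `A` (i.e. `s = ∨A < ∞`). -/
def IsLubSet (Q : QLOGroup G) (A : Set G) (s : G) : Prop :=
  s ∈ Q.P ∧ (∀ a ∈ A, Q.le a s) ∧ ∀ t ∈ Q.P, (∀ a ∈ A, Q.le a t) → Q.le s t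

/-- `p` and `q` have a common upper bound in `P` (i.e. `p ∨ q < ∞`). -/
def HasLub (Q : QLOGroup G) (p q : G) : Prop := ∃ s, Q.IsLub p q s

/-- A subset `F` is `∨`-closed if whenever `p, q ∈ F` have `p ∨ q < ∞`, then `p ∨ q ∈ F`. -/
def VeeClosed (Q : QLOGroup G) (F : Set G) : Prop :=
  ∀ p ∈ F, ∀ q ∈ F, ∀ s, Q.IsLub p q s → s ∈ F

/-- `F̄ = {∨A : A ⊆ F, A ≠ ∅, ∨A ≠ ∞}`. -/
def veeClosure (Q : QLOGroup G) (F : Set G) : Set G :=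
  {s | ∃ A ⊆ F, A.Nonempty ∧ Q.IsLubSet A s}

end QLOGroup

/-- A `P`-graph for a quasi-lattice ordered group `(G,P)`: a countable category with a
degree functor `d` into `P` satisfying the unique factorisation property.  Composition is
written in the path order of Raeburn-Sims: `comp μ ν` is defined when `s(μ) = r(ν)` (with
`src = s = dom` and `tgt = r = cod`), and `comp` is a total function whose axioms are only
imposed on composable pairs. -/
structure PGraph {G : Type u} [Group G] (Q : QLOGroup G) where
  Obj : Type
  Mor : Type
  countable_mor : Countable Mor
  src : Mor → Obj
  tgt : Mor → Obj
  ident : Obj → Mor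
  comp : Mor → Mor → Mor
  src_ident : ∀ v, src (ident v) = v
  tgt_ident : ∀ v, tgt (ident v) = v
  src_comp : ∀ μ ν, src μ = tgt ν → src (comp μ ν) = src ν
  tgt_comp : ∀ μ ν, src μ = tgt ν → tgt (comp μ ν) = tgt μ
  id_comp : ∀ μ, comp (ident (tgt μ)) μ = μ
  comp_id : ∀ μ, comp μ (ident (src μ)) = μ
  comp_assoc : ∀ μ ν ρ, src μ = tgt ν → src ν = tgt ρ →
    comp (comp μ ν) ρ = comp μ (comp ν ρ)
  d : Mor → G
  d_mem : ∀ μ, d μ ∈ Q.P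
  d_ident : ∀ v, d (ident v) = 1
  d_comp : ∀ μ ν, src μ = tgt ν → d (comp μ ν) = d μ * d ν
  factorisation : ∀ (lam : Mor) (p q : G), p ∈ Q.P → q ∈ Q.P → d lam = p * q →
    ∃! mn : Mor × Mor, src mn.1 = tgt mn.2 ∧ lam = comp mn.1 mn.2 ∧ d mn.1 = p ∧ d mn.2 = q

namespace PGraph

variable {G : Type u} [Group G] {Q : QLOGroup G} (Λ : PGraph Q)

/-- The prefix order: `λ ⪯ μ` iff `μ = λμ'` for some `μ'`. -/
def PrefixLe (lam mu : Λ.Mor) : Prop :=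
  ∃ tail, Λ.src lam = Λ.tgt tail ∧ mu = Λ.comp lam tail

/-- The set of minimal common extensions of `μ` and `ν`. -/
def MCE (mu nu : Λ.Mor) : Set Λ.Mor :=
  {lam | Λ.PrefixLe mu lam ∧ Λ.PrefixLe nu lam ∧ Q.IsLub (Λ.d mu) (Λ.d nu) (Λ.d lam)}

/-- `Λ` is finitely aligned if all the sets `MCE(μ,ν)` are finite. -/
def FinitelyAligned : Prop := ∀ mu nu : Λ.Mor, (Λ.MCE mu nu).Finite

/-- A filter of `Λ`: a nonempty subset that is downward closed (F1) and upward
directed (F2) for the prefix order. -/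
def IsGraphFilter (U : Set Λ.Mor) : Prop :=
  U.Nonempty ∧ (∀ mu ∈ U, ∀ lam, Λ.PrefixLe lam mu → lam ∈ U) ∧
    (∀ mu ∈ U, ∀ nu ∈ U, ∃ lam ∈ U, Λ.PrefixLe mu lam ∧ Λ.PrefixLe nu lam)

/-- An ultrafilter of `Λ`: a filter maximal under inclusion. -/
def IsGraphUltrafilter (U : Set Λ.Mor) : Prop :=
  Λ.IsGraphFilter U ∧ ∀ V, Λ.IsGraphFilter V → U ⊆ V → U = V

/-- `λ·U = ⋃_{μ ∈ U} {α : α ⪯ λμ}`. -/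
def actFwd (lam : Λ.Mor) (U : Set Λ.Mor) : Set Λ.Mor :=
  {a | ∃ mu ∈ U, Λ.PrefixLe a (Λ.comp lam mu)}

/-- `λ*·V = {μ : λμ ∈ V}`. -/
def actBwd (lam : Λ.Mor) (V : Set Λ.Mor) : Set Λ.Mor :=
  {mu | Λ.src lam = Λ.tgt mu ∧ Λ.comp lam mu ∈ V}

/-- `(μ,ν)` is a balanced pair: `s(μ) = s(ν)` and `d(μ) = d(ν)`. -/
def Balanced (mu nu : Λ.Mor) : Prop := Λ.src mu = Λ.src nu ∧ Λ.d mu = Λ.d nu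

/-- The pairs `(α,β)` with `να = ξβ ∈ MCE(ν,ξ)`. -/
def MCEpairs (nu xi : Λ.Mor) : Set (Λ.Mor × Λ.Mor) :=
  {p | Λ.src nu = Λ.tgt p.1 ∧ Λ.src xi = Λ.tgt p.2 ∧
    Λ.comp nu p.1 = Λ.comp xi p.2 ∧ Λ.comp nu p.1 ∈ Λ.MCE nu xi}

end PGraph

/-- `MCE(S)` for a set `S` of paths: common extensions of all elements of `S` whose degree
is the least upper bound `⋁_{μ ∈ S} d(μ)`. -/
def PGraph.MCEset {G : Type u} [Group G] {Q : QLOGroup G} (Λ : PGraph Q)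
    (S : Set Λ.Mor) : Set Λ.Mor :=
  {lam | (∀ mu ∈ S, Λ.PrefixLe mu lam) ∧ Q.IsLubSet (Λ.d '' S) (Λ.d lam)}

/-- `∨F = ⋃_{∅ ≠ S ⊆ F} MCE(S)`. -/
def PGraph.veeSet {G : Type u} [Group G] {Q : QLOGroup G} (Λ : PGraph Q)
    (F : Set Λ.Mor) : Set Λ.Mor :=
  {lam | ∃ S : Set Λ.Mor, S ⊆ F ∧ S.Nonempty ∧ lam ∈ Λ.MCEset S}

section Aux

variable {G : Type u} [Group G] {Q : QLOGroup G}

lemma qle_refl (p : G) : Q.le p p := by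
  simpa [QLOGroup.le] using Q.one_mem

lemma qle_trans {p q r : G} (h1 : Q.le p q) (h2 : Q.le q r) : Q.le p r := by
  have := Q.mul_mem h1 h2
  simpa [QLOGroup.le, mul_assoc] using this

lemma qle_antisymm {p q : G} (h1 : Q.le p q) (h2 : Q.le q p) : p = q := by
  have h3 : (p⁻¹ * q)⁻¹ ∈ Q.P := by unfold QLOGroup.le at h2; simpa [mul_inv_rev] using h2
  have := Q.eq_one_of_mem_inv_mem (p⁻¹ * q) h1 h3
  have : q = p * 1 := by rw [← this]; group
  simp [this]

variable (Λ : PGraph Q)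

lemma prefix_refl (mu : Λ.Mor) : Λ.PrefixLe mu mu :=
  ⟨Λ.ident (Λ.src mu), (Λ.tgt_ident _).symm, (Λ.comp_id mu).symm⟩

lemma prefix_trans {mu nu lam : Λ.Mor} (h1 : Λ.PrefixLe mu nu) (h2 : Λ.PrefixLe nu lam) :
    Λ.PrefixLe mu lam := by
  obtain ⟨t1, ht1, rfl⟩ := h1
  obtain ⟨t2, ht2, rfl⟩ := h2
  have hs : Λ.src t1 = Λ.tgt t2 := by
    rw [← Λ.src_comp mu t1 ht1]; exact ht2
  refine ⟨Λ.comp t1 t2, ?_, ?_⟩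
  · rw [Λ.tgt_comp t1 t2 hs]; exact ht1
  · exact (Λ.comp_assoc mu t1 t2 ht1 hs)

lemma d_le_of_prefix {mu lam : Λ.Mor} (h : Λ.PrefixLe mu lam) : Q.le (Λ.d mu) (Λ.d lam) := by
  obtain ⟨t, ht, rfl⟩ := h
  have hd := Λ.d_comp mu t ht
  have : (Λ.d mu)⁻¹ * Λ.d (Λ.comp mu t) = Λ.d t := by rw [hd]; group
  unfold QLOGroup.le
  rw [this]; exact Λ.d_mem t

lemma eq_of_prefix_of_d_eq {mu lam : Λ.Mor} (h : Λ.PrefixLe mu lam)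
    (hd : Λ.d mu = Λ.d lam) : mu = lam := by
  obtain ⟨t, ht, heq⟩ := h
  have hdc : Λ.d lam = Λ.d mu * Λ.d t := by rw [heq]; exact Λ.d_comp mu t ht
  have hdt : Λ.d t = 1 := by
    have : Λ.d mu * Λ.d t = Λ.d mu * 1 := by rw [← hdc, hd, mul_one]
    exact mul_left_cancel this
  obtain ⟨mn, _, huniq⟩ := Λ.factorisation lam (Λ.d lam) 1 (Λ.d_mem lam) Q.one_mem
    (by rw [mul_one])
  have hA : (lam, Λ.ident (Λ.src lam)) = mn :=
    huniq _ ⟨(Λ.tgt_ident _).symm, (Λ.comp_id lam).symm, rfl, Λ.d_ident _⟩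
  have hB : (mu, t) = mn := huniq _ ⟨ht, heq, hd, hdt⟩
  have := hB.trans hA.symm
  exact (congrArg Prod.fst this)

/-- If `μ ⪯ λ₁λ₂` and `d μ ≤ d λ₁`, then `μ ⪯ λ₁`. -/
lemma prefix_of_prefix_le {lam1 lam2 mu : Λ.Mor} (h12 : Λ.src lam1 = Λ.tgt lam2)
    (hmu : Λ.PrefixLe mu (Λ.comp lam1 lam2)) (hd : Q.le (Λ.d mu) (Λ.d lam1)) :
    Λ.PrefixLe mu lam1 := by
  obtain ⟨t, hst, heq⟩ := hmu
  have hdlam : Λ.d (Λ.comp lam1 lam2) = Λ.d lam1 * Λ.d lam2 := Λ.d_comp lam1 lam2 h12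
  have hdlam' : Λ.d (Λ.comp lam1 lam2) = Λ.d mu * Λ.d t := by
    rw [heq]; exact Λ.d_comp mu t hst
  have hdt : Λ.d t = ((Λ.d mu)⁻¹ * Λ.d lam1) * Λ.d lam2 := by
    have : Λ.d mu * Λ.d t = Λ.d lam1 * Λ.d lam2 := by rw [← hdlam', hdlam]
    have h2 : Λ.d t = (Λ.d mu)⁻¹ * (Λ.d lam1 * Λ.d lam2) := by
      rw [← this]; group
    rw [h2, mul_assoc]
  obtain ⟨ab, ⟨hab, htab, hda, hdb⟩, _⟩ := Λ.factorisation t ((Λ.d mu)⁻¹ * Λ.d lam1)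
    (Λ.d lam2) hd (Λ.d_mem lam2) hdt
  obtain ⟨a, b⟩ := ab
  simp only at hab htab hda hdb
  have hmua : Λ.src mu = Λ.tgt a := by
    rw [hst, htab, Λ.tgt_comp a b hab]
  have hassoc : Λ.comp lam1 lam2 = Λ.comp (Λ.comp mu a) b := by
    rw [heq, htab, Λ.comp_assoc mu a b hmua hab]
  obtain ⟨mn, _, huniq⟩ := Λ.factorisation (Λ.comp lam1 lam2) (Λ.d lam1) (Λ.d lam2)
    (Λ.d_mem lam1) (Λ.d_mem lam2) hdlam
  have hA : (lam1, lam2) = mn := huniq _ ⟨h12, rfl, rfl, rfl⟩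
  have hB : (Λ.comp mu a, b) = mn := by
    refine huniq _ ⟨?_, hassoc, ?_, hdb⟩
    · rw [Λ.src_comp mu a hmua]; exact hab
    · rw [Λ.d_comp mu a hmua, hda]; group
  have h1 : lam1 = Λ.comp mu a := congrArg Prod.fst (hA.trans hB.symm)
  exact ⟨a, hmua, h1⟩

/-- Any finite nonempty set of group elements with a common upper bound in `P`
has a least upper bound in `P`. -/
lemma lubset_exists (T : Finset G) (hT : T.Nonempty) :
    ∀ t ∈ Q.P, (∀ a ∈ T, Q.le a t) → ∃ s, Q.IsLubSet ↑T s := by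
  induction hT using Finset.Nonempty.cons_induction with
  | singleton a =>
    intro t ht hub
    obtain ⟨r, hrP, har, _, hmin⟩ := Q.lub_exists a a ⟨t, ht, hub a (by simp),
      hub a (by simp)⟩
    refine ⟨r, hrP, ?_, ?_⟩
    · intro x hx
      simp only [Finset.coe_singleton, Set.mem_singleton_iff] at hx
      subst hx; exact har
    · intro u hu hub'
      exact hmin u hu (hub' a (by simp)) (hub' a (by simp))
  | cons a T ha hT ih =>
    intro t ht hub
    obtain ⟨s', hs'⟩ := ih t ht (fun b hb => hub b (Finset.mem_cons_of_mem hb))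
    have hs't : Q.le s' t := hs'.2.2 t ht (fun b hb => hub b (Finset.mem_cons_of_mem
      (by exact_mod_cast hb)))
    obtain ⟨r, hrP, har, hs'r, hmin⟩ := Q.lub_exists a s'
      ⟨t, ht, hub a (Finset.mem_cons_self a T), hs't⟩
    refine ⟨r, hrP, ?_, ?_⟩
    · intro x hx
      simp only [Finset.coe_cons, Set.mem_insert_iff] at hx
      rcases hx with rfl | hx
      · exact har
      · exact qle_trans (hs'.2.1 x hx) hs'r
    · intro u hu hub'
      refine hmin u hu (hub' a (by simp)) ?_
      refine hs'.2.2 u hu ?_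
      intro b hb
      refine hub' b ?_
      rw [Finset.coe_cons]
      exact Set.mem_insert_of_mem _ hb

lemma mceset_singleton (mu : Λ.Mor) : Λ.MCEset {mu} = {mu} := by
  ext lam
  constructor
  · rintro ⟨hpre, hlub⟩
    have h1 : Q.le (Λ.d mu) (Λ.d lam) := hlub.2.1 (Λ.d mu) ⟨mu, rfl, rfl⟩
    have h2 : Q.le (Λ.d lam) (Λ.d mu) := hlub.2.2 (Λ.d mu) (Λ.d_mem mu)
      (by rintro x ⟨y, hy, rfl⟩; simp only [Set.mem_singleton_iff] at hy; subst hy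
          exact qle_refl _)
    have := eq_of_prefix_of_d_eq Λ (hpre mu rfl) (qle_antisymm h1 h2)
    simp [← this]
  · intro hlam
    rw [Set.mem_singleton_iff] at hlam
    rw [hlam]
    refine ⟨?_, Λ.d_mem mu, ?_, ?_⟩
    · intro nu hnu
      rw [Set.mem_singleton_iff] at hnu
      rw [hnu]
      exact prefix_refl Λ mu
    · rintro x ⟨y, hy, rfl⟩
      rw [Set.mem_singleton_iff] at hy
      rw [hy]
      exact qle_refl _
    · intro u hu hub
      exact hub (Λ.d mu) ⟨mu, rfl, rfl⟩

/-- Decomposition: an element of `MCE(insert μ T)` is an MCE of `μ` and some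
element of `MCE(T)`. -/
lemma mceset_decomp (T : Finset Λ.Mor) (hT : T.Nonempty) (mu lam : Λ.Mor)
    (hlam : lam ∈ Λ.MCEset (insert mu ↑T)) :
    ∃ lam1 ∈ Λ.MCEset ↑T, lam ∈ Λ.MCE lam1 mu := by
  classical
  obtain ⟨hpre, hlub⟩ := hlam
  have hubT : ∀ a ∈ T.image Λ.d, Q.le a (Λ.d lam) := by
    intro a ha
    obtain ⟨b, hb, rfl⟩ := Finset.mem_image.mp ha
    exact d_le_of_prefix Λ (hpre b (Set.mem_insert_of_mem _ hb))
  obtain ⟨s, hs⟩ := lubset_exists (T.image Λ.d) (hT.image Λ.d) (Λ.d lam)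
    (Λ.d_mem lam) hubT
  rw [Finset.coe_image] at hs
  have hsub : ∀ a ∈ (T : Set Λ.Mor), Q.le (Λ.d a) s := fun a ha =>
    hs.2.1 (Λ.d a) ⟨a, ha, rfl⟩
  have hslam : Q.le s (Λ.d lam) := hs.2.2 (Λ.d lam) (Λ.d_mem lam)
    (by rintro x ⟨y, hy, rfl⟩; exact d_le_of_prefix Λ (hpre y (Set.mem_insert_of_mem _ hy)))
  have hfac : Λ.d lam = s * (s⁻¹ * Λ.d lam) := by group
  obtain ⟨ab, ⟨hab, heq, hda, hdb⟩, _⟩ := Λ.factorisation lam s (s⁻¹ * Λ.d lam)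
    hs.1 hslam hfac
  obtain ⟨lam1, lam2⟩ := ab
  simp only at hab heq hda hdb
  have hlam1T : lam1 ∈ Λ.MCEset ↑T := by
    refine ⟨?_, ?_⟩
    · intro nu hnu
      refine prefix_of_prefix_le Λ hab ?_ ?_
      · rw [← heq]; exact hpre nu (Set.mem_insert_of_mem _ hnu)
      · rw [hda]; exact hsub nu hnu
    · rw [hda]; exact hs
  refine ⟨lam1, hlam1T, ⟨lam2, hab, heq⟩, hpre mu (Set.mem_insert _ _), ?_⟩
  refine ⟨Λ.d_mem lam, ?_, d_le_of_prefix Λ (hpre mu (Set.mem_insert _ _)), ?_⟩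
  · rw [hda]; exact hslam
  · intro u hu h1 h2
    refine hlub.2.2 u hu ?_
    rintro x ⟨y, hy, rfl⟩
    rcases hy with rfl | hy
    · exact h2
    · exact qle_trans (hsub y hy) (by rw [hda] at h1; exact h1)

lemma mceset_finite_and_min (hFA : Λ.FinitelyAligned) (T : Finset Λ.Mor) (hT : T.Nonempty) :
    (Λ.MCEset ↑T).Finite ∧
    ∀ K : Set Λ.Mor, (↑T : Set Λ.Mor) ⊆ K → (∀ mu ∈ K, ∀ nu ∈ K, Λ.MCE mu nu ⊆ K) →
      Λ.MCEset ↑T ⊆ K := by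
  induction hT using Finset.Nonempty.cons_induction with
  | singleton a =>
    rw [Finset.coe_singleton, mceset_singleton]
    exact ⟨Set.finite_singleton a, fun K hK _ => by
      simpa using hK (by simp)⟩
  | cons a T ha hT ih =>
    have hcoe : (↑(Finset.cons a T ha) : Set Λ.Mor) = insert a ↑T := by simp
    constructor
    · apply Set.Finite.subset (Set.Finite.biUnion ih.1 (fun lam1 _ => hFA lam1 a))
      intro lam hlam
      rw [hcoe] at hlam
      obtain ⟨lam1, h1, h2⟩ := mceset_decomp Λ T hT a lam hlam
      exact Set.mem_biUnion h1 h2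
    · intro K hK hcl lam hlam
      rw [hcoe] at hlam hK
      obtain ⟨lam1, h1, h2⟩ := mceset_decomp Λ T hT a lam hlam
      have hlam1K : lam1 ∈ K := ih.2 K (fun x hx => hK (Set.mem_insert_of_mem _ hx)) hcl h1
      exact hcl lam1 hlam1K a (hK (Set.mem_insert _ _)) h2

end Aux

/-- For a finite subset `F` of a finitely aligned `P`-graph,
`∨F = ⋃_{S ⊆ F} MCE(S)` is the smallest subset of `Λ` containing `F` and closed under
taking minimal common extensions; in particular `∨F` is finite. -/
theorem stmt16 {G : Type u} [Group G] {Q : QLOGroup G} (Λ : PGraph Q)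
    (hFA : Λ.FinitelyAligned) (F : Set Λ.Mor) (hF : F.Finite) :
    F ⊆ Λ.veeSet F ∧
    (∀ mu ∈ Λ.veeSet F, ∀ nu ∈ Λ.veeSet F, Λ.MCE mu nu ⊆ Λ.veeSet F) ∧
    (∀ K : Set Λ.Mor, F ⊆ K → (∀ mu ∈ K, ∀ nu ∈ K, Λ.MCE mu nu ⊆ K) →
      Λ.veeSet F ⊆ K) ∧
    (Λ.veeSet F).Finite := by
  refine ⟨?_, ?_, ?_, ?_⟩
  · -- F ⊆ ∨F
    intro mu hmu
    exact ⟨{mu}, Set.singleton_subset_iff.mpr hmu, Set.singleton_nonempty mu,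
      by rw [mceset_singleton]; rfl⟩
  · -- closure under MCE
    rintro mu ⟨S1, hS1F, hS1ne, hmu1, hmu2⟩ nu ⟨S2, hS2F, hS2ne, hnu1, hnu2⟩
      lam ⟨hpmu, hpnu, hlub⟩
    refine ⟨S1 ∪ S2, Set.union_subset hS1F hS2F, hS1ne.mono Set.subset_union_left, ?_, ?_⟩
    · intro a ha
      rcases ha with ha | ha
      · exact prefix_trans Λ (hmu1 a ha) hpmu
      · exact prefix_trans Λ (hnu1 a ha) hpnu
    · refine ⟨Λ.d_mem lam, ?_, ?_⟩
      · rintro x ⟨y, hy, rfl⟩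
        rcases hy with hy | hy
        · exact qle_trans (hmu2.2.1 (Λ.d y) ⟨y, hy, rfl⟩) hlub.2.1
        · exact qle_trans (hnu2.2.1 (Λ.d y) ⟨y, hy, rfl⟩) hlub.2.2.1
      · intro u hu hub
        have h1 : Q.le (Λ.d mu) u := hmu2.2.2 u hu
          (by rintro x ⟨y, hy, rfl⟩; exact hub (Λ.d y) ⟨y, Or.inl hy, rfl⟩)
        have h2 : Q.le (Λ.d nu) u := hnu2.2.2 u hu
          (by rintro x ⟨y, hy, rfl⟩; exact hub (Λ.d y) ⟨y, Or.inr hy, rfl⟩)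
        exact hlub.2.2.2 u hu h1 h2
  · -- minimality
    rintro K hKF hKcl lam ⟨S, hSF, hSne, hlam⟩
    have hSfin : S.Finite := hF.subset hSF
    have hcoe : (↑hSfin.toFinset : Set Λ.Mor) = S := hSfin.coe_toFinset
    have hTne : hSfin.toFinset.Nonempty := by
      rw [← Finset.coe_nonempty, hcoe]; exact hSne
    refine (mceset_finite_and_min Λ hFA hSfin.toFinset hTne).2 K
      (by rw [hcoe]; exact hSF.trans hKF) hKcl ?_
    rw [hcoe]; exact hlam
  · -- finiteness
    have hidx : {T : Finset Λ.Mor | ↑T ⊆ F ∧ T.Nonempty}.Finite := by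
      have h1 : {T : Finset Λ.Mor | ↑T ⊆ F}.Finite := by
        have := hF.finite_subsets
        exact Set.Finite.preimage (Set.injOn_of_injective Finset.coe_injective) this
      exact h1.subset (fun T hT => hT.1)
    apply Set.Finite.subset (Set.Finite.biUnion hidx
      (fun T hT => (mceset_finite_and_min Λ hFA T hT.2).1))
    rintro lam ⟨S, hSF, hSne, hlam⟩
    have hSfin : S.Finite := hF.subset hSF
    have hcoe : (↑hSfin.toFinset : Set Λ.Mor) = S := hSfin.coe_toFinset
    have hTne : hSfin.toFinset.Nonempty := by
      rw [← Finset.coe_nonempty, hcoe]; exact hSne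
    refine Set.mem_biUnion (⟨by rw [hcoe]; exact hSF, hTne⟩ :
      hSfin.toFinset ∈ {T : Finset Λ.Mor | ↑T ⊆ F ∧ T.Nonempty}) ?_
    rw [hcoe]; exact hlam
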